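/- Let 0 ≤ β ≤ √5/2 and set ā = −(√2/5)(β + √(5−4β²)). The Hessian matrix of V_β at the hexagonal point (ā, ā, ā) is positive definite if and only if 1/√17 < β < √5/2. -/

import Mathlib

/-- The Lyapunov function `V_β` of the amplitude ODE system. -/
noncomputable def V (β a b c : ℝ) : ℝ :=
  -3 * (1 - β ^ 2) * (a ^ 2 + b ^ 2 + c ^ 2) + 6 * Real.sqrt 2 * β * (a * b * c)
    + 3 * (a ^ 2 * b ^ 2 + b ^ 2 * c ^ 2 + a ^ 2 * c ^ 2)
    + 3 / 4 * (a ^ 4 + b ^ 4 + c ^ 4)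

/-- Partial derivative of a function of three real variables in the first variable. -/
noncomputable def pA (f : ℝ → ℝ → ℝ → ℝ) (a b c : ℝ) : ℝ := deriv (fun t => f t b c) a

/-- Partial derivative in the second variable. -/
noncomputable def pB (f : ℝ → ℝ → ℝ → ℝ) (a b c : ℝ) : ℝ := deriv (fun t => f a t c) b

/-- Partial derivative in the third variable. -/
noncomputable def pC (f : ℝ → ℝ → ℝ → ℝ) (a b c : ℝ) : ℝ := deriv (fun t => f a b t) c

/-- The Hessian matrix of `V_β` (matrix of second partial derivatives). -/
noncomputable def hessV (β a b c : ℝ) : Matrix (Fin 3) (Fin 3) ℝ :=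
  !![pA (pA (V β)) a b c, pA (pB (V β)) a b c, pA (pC (V β)) a b c;
     pB (pA (V β)) a b c, pB (pB (V β)) a b c, pB (pC (V β)) a b c;
     pC (pA (V β)) a b c, pC (pB (V β)) a b c, pC (pC (V β)) a b c]

/- ### Auxiliary derivative computations -/

lemma deriv_q (c0 c1 c2 c3 c4 x : ℝ) :
    deriv (fun t : ℝ => c0 + c1 * t + c2 * t ^ 2 + c3 * t ^ 3 + c4 * t ^ 4) x
      = c1 + 2 * c2 * x + 3 * c3 * x ^ 2 + 4 * c4 * x ^ 3 := by
  have h1 : HasDerivAt (fun t : ℝ => t) 1 x := hasDerivAt_id x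
  have h2 : HasDerivAt (fun t : ℝ => t ^ 2) (2 * x) x := by simpa using hasDerivAt_pow 2 x
  have h3 : HasDerivAt (fun t : ℝ => t ^ 3) (3 * x ^ 2) x := by simpa using hasDerivAt_pow 3 x
  have h4 : HasDerivAt (fun t : ℝ => t ^ 4) (4 * x ^ 3) x := by simpa using hasDerivAt_pow 4 x
  have H := ((((hasDerivAt_const x c0).add (h1.const_mul c1)).add (h2.const_mul c2)).add
      (h3.const_mul c3)).add (h4.const_mul c4)
  rw [HasDerivAt.deriv (f := fun t : ℝ => c0 + c1 * t + c2 * t ^ 2 + c3 * t ^ 3 + c4 * t ^ 4) H]; ring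

lemma pA_V (β a b c : ℝ) : pA (V β) a b c
    = -6 * (1 - β ^ 2) * a + 6 * Real.sqrt 2 * β * (b * c) + 6 * a * (b ^ 2 + c ^ 2)
      + 3 * a ^ 3 := by
  have h : (fun t => V β t b c) = fun t =>
      (-3 * (1 - β ^ 2) * (b ^ 2 + c ^ 2) + 3 * (b ^ 2 * c ^ 2) + 3 / 4 * (b ^ 4 + c ^ 4))
      + (6 * Real.sqrt 2 * β * (b * c)) * t
      + (-3 * (1 - β ^ 2) + 3 * (b ^ 2 + c ^ 2)) * t ^ 2 + 0 * t ^ 3 + (3 / 4) * t ^ 4 := by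
    funext t; simp only [V]; ring
  rw [pA, h, deriv_q]; ring

lemma pB_V (β a b c : ℝ) : pB (V β) a b c
    = -6 * (1 - β ^ 2) * b + 6 * Real.sqrt 2 * β * (a * c) + 6 * b * (a ^ 2 + c ^ 2)
      + 3 * b ^ 3 := by
  have h : (fun t => V β a t c) = fun t =>
      (-3 * (1 - β ^ 2) * (a ^ 2 + c ^ 2) + 3 * (a ^ 2 * c ^ 2) + 3 / 4 * (a ^ 4 + c ^ 4))
      + (6 * Real.sqrt 2 * β * (a * c)) * t
      + (-3 * (1 - β ^ 2) + 3 * (a ^ 2 + c ^ 2)) * t ^ 2 + 0 * t ^ 3 + (3 / 4) * t ^ 4 := by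
    funext t; simp only [V]; ring
  rw [pB, h, deriv_q]; ring

lemma pC_V (β a b c : ℝ) : pC (V β) a b c
    = -6 * (1 - β ^ 2) * c + 6 * Real.sqrt 2 * β * (a * b) + 6 * c * (a ^ 2 + b ^ 2)
      + 3 * c ^ 3 := by
  have h : (fun t => V β a b t) = fun t =>
      (-3 * (1 - β ^ 2) * (a ^ 2 + b ^ 2) + 3 * (a ^ 2 * b ^ 2) + 3 / 4 * (a ^ 4 + b ^ 4))
      + (6 * Real.sqrt 2 * β * (a * b)) * t
      + (-3 * (1 - β ^ 2) + 3 * (a ^ 2 + b ^ 2)) * t ^ 2 + 0 * t ^ 3 + (3 / 4) * t ^ 4 := by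
    funext t; simp only [V]; ring
  rw [pC, h, deriv_q]; ring

lemma pApA_V (β a b c : ℝ) : pA (pA (V β)) a b c
    = -6 * (1 - β ^ 2) + 6 * (b ^ 2 + c ^ 2) + 9 * a ^ 2 := by
  have h : (fun t => pA (V β) t b c) = fun t =>
      (6 * Real.sqrt 2 * β * (b * c)) + (-6 * (1 - β ^ 2) + 6 * (b ^ 2 + c ^ 2)) * t
        + 0 * t ^ 2 + 3 * t ^ 3 + 0 * t ^ 4 := by
    funext t; rw [pA_V]; ring
  rw [pA, h, deriv_q]; ring

lemma pBpA_V (β a b c : ℝ) : pB (pA (V β)) a b c = 6 * Real.sqrt 2 * β * c + 12 * a * b := by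
  have h : (fun t => pA (V β) a t c) = fun t =>
      (-6 * (1 - β ^ 2) * a + 6 * a * c ^ 2 + 3 * a ^ 3) + (6 * Real.sqrt 2 * β * c) * t
        + (6 * a) * t ^ 2 + 0 * t ^ 3 + 0 * t ^ 4 := by
    funext t; rw [pA_V]; ring
  rw [pB, h, deriv_q]; ring

lemma pCpA_V (β a b c : ℝ) : pC (pA (V β)) a b c = 6 * Real.sqrt 2 * β * b + 12 * a * c := by
  have h : (fun t => pA (V β) a b t) = fun t =>
      (-6 * (1 - β ^ 2) * a + 6 * a * b ^ 2 + 3 * a ^ 3) + (6 * Real.sqrt 2 * β * b) * t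
        + (6 * a) * t ^ 2 + 0 * t ^ 3 + 0 * t ^ 4 := by
    funext t; rw [pA_V]; ring
  rw [pC, h, deriv_q]; ring

lemma pApB_V (β a b c : ℝ) : pA (pB (V β)) a b c = 6 * Real.sqrt 2 * β * c + 12 * a * b := by
  have h : (fun t => pB (V β) t b c) = fun t =>
      (-6 * (1 - β ^ 2) * b + 6 * b * c ^ 2 + 3 * b ^ 3) + (6 * Real.sqrt 2 * β * c) * t
        + (6 * b) * t ^ 2 + 0 * t ^ 3 + 0 * t ^ 4 := by
    funext t; rw [pB_V]; ring
  rw [pA, h, deriv_q]; ring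

lemma pBpB_V (β a b c : ℝ) : pB (pB (V β)) a b c
    = -6 * (1 - β ^ 2) + 6 * (a ^ 2 + c ^ 2) + 9 * b ^ 2 := by
  have h : (fun t => pB (V β) a t c) = fun t =>
      (6 * Real.sqrt 2 * β * (a * c)) + (-6 * (1 - β ^ 2) + 6 * (a ^ 2 + c ^ 2)) * t
        + 0 * t ^ 2 + 3 * t ^ 3 + 0 * t ^ 4 := by
    funext t; rw [pB_V]; ring
  rw [pB, h, deriv_q]; ring

lemma pCpB_V (β a b c : ℝ) : pC (pB (V β)) a b c = 6 * Real.sqrt 2 * β * a + 12 * b * c := by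
  have h : (fun t => pB (V β) a b t) = fun t =>
      (-6 * (1 - β ^ 2) * b + 6 * b * a ^ 2 + 3 * b ^ 3) + (6 * Real.sqrt 2 * β * a) * t
        + (6 * b) * t ^ 2 + 0 * t ^ 3 + 0 * t ^ 4 := by
    funext t; rw [pB_V]; ring
  rw [pC, h, deriv_q]; ring

lemma pApC_V (β a b c : ℝ) : pA (pC (V β)) a b c = 6 * Real.sqrt 2 * β * b + 12 * a * c := by
  have h : (fun t => pC (V β) t b c) = fun t =>
      (-6 * (1 - β ^ 2) * c + 6 * c * b ^ 2 + 3 * c ^ 3) + (6 * Real.sqrt 2 * β * b) * t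
        + (6 * c) * t ^ 2 + 0 * t ^ 3 + 0 * t ^ 4 := by
    funext t; rw [pC_V]; ring
  rw [pA, h, deriv_q]; ring

lemma pBpC_V (β a b c : ℝ) : pB (pC (V β)) a b c = 6 * Real.sqrt 2 * β * a + 12 * b * c := by
  have h : (fun t => pC (V β) a t c) = fun t =>
      (-6 * (1 - β ^ 2) * c + 6 * c * a ^ 2 + 3 * c ^ 3) + (6 * Real.sqrt 2 * β * a) * t
        + (6 * c) * t ^ 2 + 0 * t ^ 3 + 0 * t ^ 4 := by
    funext t; rw [pC_V]; ring
  rw [pB, h, deriv_q]; ring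

lemma pCpC_V (β a b c : ℝ) : pC (pC (V β)) a b c
    = -6 * (1 - β ^ 2) + 6 * (a ^ 2 + b ^ 2) + 9 * c ^ 2 := by
  have h : (fun t => pC (V β) a b t) = fun t =>
      (6 * Real.sqrt 2 * β * (a * b)) + (-6 * (1 - β ^ 2) + 6 * (a ^ 2 + b ^ 2)) * t
        + 0 * t ^ 2 + 3 * t ^ 3 + 0 * t ^ 4 := by
    funext t; rw [pC_V]; ring
  rw [pC, h, deriv_q]; ring

lemma hess_eq (β a : ℝ) :
    hessV β a a a =
      !![-6 * (1 - β ^ 2) + 21 * a ^ 2, 6 * Real.sqrt 2 * β * a + 12 * a ^ 2,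
          6 * Real.sqrt 2 * β * a + 12 * a ^ 2;
        6 * Real.sqrt 2 * β * a + 12 * a ^ 2, -6 * (1 - β ^ 2) + 21 * a ^ 2,
          6 * Real.sqrt 2 * β * a + 12 * a ^ 2;
        6 * Real.sqrt 2 * β * a + 12 * a ^ 2, 6 * Real.sqrt 2 * β * a + 12 * a ^ 2,
          -6 * (1 - β ^ 2) + 21 * a ^ 2] := by
  unfold hessV
  rw [pApA_V, pBpA_V, pCpA_V, pApB_V, pBpB_V, pCpB_V, pApC_V, pBpC_V, pCpC_V]
  congr 1 <;> ring

/- ### Positive definiteness of the circulant matrix -/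

lemma posdef_circ (d e : ℝ) :
    (!![d, e, e; e, d, e; e, e, d] : Matrix (Fin 3) (Fin 3) ℝ).PosDef ↔
      0 < d + 2 * e ∧ 0 < d - e := by
  rw [Matrix.posDef_iff_dotProduct_mulVec]
  constructor
  · rintro ⟨-, h⟩
    constructor
    · have h1 := h (x := ![1, 1, 1]) (by
        intro hc
        have := congrFun hc 0
        simp at this)
      simp [Matrix.mulVec, dotProduct, Fin.sum_univ_three, Matrix.vecHead,
        Matrix.vecTail] at h1
      linarith
    · have h1 := h (x := ![1, -1, 0]) (by
        intro hc
        have := congrFun hc 0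
        simp at this)
      simp [Matrix.mulVec, dotProduct, Fin.sum_univ_three, Matrix.vecHead,
        Matrix.vecTail] at h1
      linarith
  · rintro ⟨h1, h2⟩
    refine ⟨?_, ?_⟩
    · show _ = _
      ext i j
      fin_cases i <;> fin_cases j <;> rfl
    · intro x hx
      have hx0 : x 0 ≠ 0 ∨ x 1 ≠ 0 ∨ x 2 ≠ 0 := by
        by_contra hc
        push_neg at hc
        apply hx
        ext i
        fin_cases i <;> simp [hc.1, hc.2.1, hc.2.2]
      have hsq : 0 < (x 0) ^ 2 + (x 1) ^ 2 + (x 2) ^ 2 := by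
        rcases hx0 with h | h | h <;>
          nlinarith [mul_self_pos.mpr h, sq_nonneg (x 0), sq_nonneg (x 1), sq_nonneg (x 2)]
      simp [Matrix.mulVec, dotProduct, Fin.sum_univ_three, Matrix.vecHead,
        Matrix.vecTail]
      rcases le_or_gt 0 e with he | he
      · nlinarith [mul_pos h2 hsq, mul_nonneg he (sq_nonneg (x 0 + x 1 + x 2))]
      · nlinarith [mul_pos h1 hsq,
          mul_nonneg (le_of_lt (neg_pos.mpr he))
            (by positivity : (0:ℝ) ≤ (x 0 - x 1) ^ 2 + (x 1 - x 2) ^ 2 + (x 0 - x 2) ^ 2)]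


lemma aux_lt (β s : ℝ) (hβ0 : 0 ≤ β) (hs0 : 0 ≤ s) (hs2 : s ^ 2 = 5 - 4 * β ^ 2) :
    β < Real.sqrt 5 / 2 ↔ 0 < s * (s + β) := by
  have h5s : Real.sqrt 5 ^ 2 = 5 := Real.sq_sqrt (by norm_num)
  have h5pos : 0 < Real.sqrt 5 := Real.sqrt_pos.mpr (by norm_num)
  constructor
  · intro h
    have h4 : 4 * β ^ 2 < 5 := by
      nlinarith [mul_nonneg (by linarith : (0:ℝ) ≤ Real.sqrt 5 - 2 * β)
        (by linarith : (0:ℝ) ≤ Real.sqrt 5 + 2 * β)]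
    have hspos : 0 < s := lt_of_le_of_ne hs0 (by intro h'; nlinarith)
    have : 0 < s + β := by linarith
    exact mul_pos hspos this
  · intro h
    have hspos : 0 < s := by
      rcases lt_or_eq_of_le hs0 with h' | h'
      · exact h'
      · exfalso; rw [← h'] at h; simp at h
    by_contra hc
    push_neg at hc
    nlinarith [mul_nonneg (by linarith : (0:ℝ) ≤ 2 * β - Real.sqrt 5)
      (by linarith : (0:ℝ) ≤ 2 * β + Real.sqrt 5), mul_pos hspos hspos]

lemma aux_gt (β s : ℝ) (hβ0 : 0 ≤ β) (hs0 : 0 ≤ s) (hs2 : s ^ 2 = 5 - 4 * β ^ 2) :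
    1 / Real.sqrt 17 < β ↔ 0 < 13 * β ^ 2 + 8 * β * s - 5 := by
  have h17pos : 0 < Real.sqrt 17 := Real.sqrt_pos.mpr (by norm_num)
  have h17s : Real.sqrt 17 ^ 2 = 17 := Real.sq_sqrt (by norm_num)
  have hsq17 : (β * Real.sqrt 17) ^ 2 = 17 * β ^ 2 := by rw [mul_pow, h17s]; ring
  have hq : (5 - 13 * β ^ 2) ^ 2 - (8 * β * s) ^ 2
      = 25 * (1 - 17 * β ^ 2) * (1 - β ^ 2) := by
    linear_combination (-64 * β ^ 2) * hs2
  constructor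
  · intro h
    have ht : 1 < β * Real.sqrt 17 := by
      rw [div_lt_iff₀ h17pos] at h; linarith
    have h17 : 1 < 17 * β ^ 2 := by
      nlinarith [hsq17, ht, sq_nonneg (β * Real.sqrt 17 - 1)]
    rcases le_or_gt (5 - 13 * β ^ 2) 0 with hc | hc
    · nlinarith [mul_nonneg hβ0 hs0]
    · nlinarith [mul_pos (by linarith : (0:ℝ) < 17 * β ^ 2 - 1)
        (by nlinarith : (0:ℝ) < 1 - β ^ 2), mul_nonneg hβ0 hs0]
  · intro h
    have h17 : 1 < 17 * β ^ 2 := by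
      by_contra hc
      push_neg at hc
      have hA : 0 < 5 - 13 * β ^ 2 := by nlinarith
      have hB : 0 ≤ 8 * β * s := by positivity
      nlinarith [mul_nonneg (by linarith : (0:ℝ) ≤ 1 - 17 * β ^ 2)
        (by nlinarith : (0:ℝ) ≤ 1 - β ^ 2)]
    have hβpos : 0 < β := by
      rcases lt_or_eq_of_le hβ0 with h' | h'
      · exact h'
      · exfalso; rw [← h'] at h17; norm_num at h17
    rw [div_lt_iff₀ h17pos]
    by_contra hc
    push_neg at hc
    have : 17 * β ^ 2 ≤ 1 := by
      nlinarith [hsq17, hc, mul_nonneg hβ0 h17pos.le]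
    linarith

/-- For `0 ≤ β ≤ √5/2` and `ā = -(√2/5)(β + √(5 - 4β²))`, the Hessian of
`V_β` at the hexagonal point `(ā,ā,ā)` is positive definite iff
`1/√17 < β < √5/2`. -/
theorem hessian_at_hexagonal (β abar : ℝ) (hβ0 : 0 ≤ β)
    (hβ1 : β ≤ Real.sqrt 5 / 2)
    (habar : abar = -(Real.sqrt 2 / 5) * (β + Real.sqrt (5 - 4 * β ^ 2))) :
    (hessV β abar abar abar).PosDef ↔
      1 / Real.sqrt 17 < β ∧ β < Real.sqrt 5 / 2 := by
  have h5nn : (0:ℝ) ≤ 5 := by norm_num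
  have h5s : Real.sqrt 5 ^ 2 = 5 := Real.sq_sqrt h5nn
  have h5pos : 0 < Real.sqrt 5 := Real.sqrt_pos.mpr (by norm_num)
  have h5 : (0:ℝ) ≤ 5 - 4 * β ^ 2 := by
    nlinarith [mul_nonneg (by linarith : (0:ℝ) ≤ Real.sqrt 5 - 2 * β)
      (by linarith : (0:ℝ) ≤ Real.sqrt 5 + 2 * β)]
  obtain ⟨s, hs_def⟩ : ∃ s, Real.sqrt (5 - 4 * β ^ 2) = s := ⟨_, rfl⟩
  rw [hs_def] at habar
  have hs2 : s ^ 2 = 5 - 4 * β ^ 2 := by rw [← hs_def]; exact Real.sq_sqrt h5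
  have hs0 : 0 ≤ s := by rw [← hs_def]; exact Real.sqrt_nonneg _
  have h2s : Real.sqrt 2 ^ 2 = 2 := Real.sq_sqrt (by norm_num)
  have habar2 : abar ^ 2 = 2 / 25 * (β + s) ^ 2 := by
    have : abar ^ 2 = Real.sqrt 2 ^ 2 * ((β + s) ^ 2 / 25) := by rw [habar]; ring
    rw [this, h2s]; ring
  have hre : Real.sqrt 2 * abar = -(2 / 5) * (β + s) := by
    have : Real.sqrt 2 * abar = -(Real.sqrt 2 ^ 2 / 5) * (β + s) := by rw [habar]; ring
    rw [this, h2s]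
  have key1 : (-6 * (1 - β ^ 2) + 21 * abar ^ 2)
      + 2 * (6 * Real.sqrt 2 * β * abar + 12 * abar ^ 2) = 12 / 5 * (s * (s + β)) := by
    linear_combination (45:ℝ) * habar2 + 12 * β * hre + (6/5) * hs2
  have key2 : (-6 * (1 - β ^ 2) + 21 * abar ^ 2)
      - (6 * Real.sqrt 2 * β * abar + 12 * abar ^ 2) = 12 / 25 * (13 * β ^ 2 + 8 * β * s - 5) := by
    linear_combination (9:ℝ) * habar2 - 6 * β * hre + (18/25) * hs2
  have h17pos : 0 < Real.sqrt 17 := Real.sqrt_pos.mpr (by norm_num)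
  have h17s : Real.sqrt 17 ^ 2 = 17 := Real.sq_sqrt (by norm_num)
  have hβlt_iff := aux_lt β s hβ0 hs0 hs2
  have hβgt_iff := aux_gt β s hβ0 hs0 hs2
  rw [hess_eq, posdef_circ, key1, key2]
  constructor
  · rintro ⟨hA, hB⟩
    exact ⟨hβgt_iff.mpr (by linarith), hβlt_iff.mpr (by linarith)⟩
  · rintro ⟨hA, hB⟩
    have := hβgt_iff.mp hA
    have := hβlt_iff.mp hB
    constructor <;> linarith
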